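/- arXiv:1001.2299 — 2 statements merged into one kernel-verified Lean document; each statement's English description precedes it below -/
import Mathlib

section
/- For any κ ∈ ℝ and any metric space X with geodesics σ, τ issuing from p toward q and r, the Alexandrov angle ∠_p(q,r) (defined via comparison triangles in the Euclidean plane) equals lim_{ε→0} sup_{0<t,t'<ε} ∠_p^{(κ)}(σ(t),τ(t')), where ∠_p^{(κ)} denotes the vertex angle of the comparison triangle in the model space M_κ². -/
open Set

/-- The vertex angle of the comparison triangle in the model space `M_κ²` with side
lengths `a`, `b` adjacent to the vertex and `c` opposite, via the law of cosines of
constant curvature `κ` (hyperbolic for `κ < 0`, Euclidean for `κ = 0`, spherical for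
`κ > 0`). -/
noncomputable def cmpAngle (κ a b c : ℝ) : ℝ :=
  if κ < 0 then
    Real.arccos ((Real.cosh (Real.sqrt (-κ) * a) * Real.cosh (Real.sqrt (-κ) * b) -
        Real.cosh (Real.sqrt (-κ) * c)) /
      (Real.sinh (Real.sqrt (-κ) * a) * Real.sinh (Real.sqrt (-κ) * b)))
  else if κ = 0 then Real.arccos ((a ^ 2 + b ^ 2 - c ^ 2) / (2 * a * b))
  else
    Real.arccos ((Real.cos (Real.sqrt κ * c) - Real.cos (Real.sqrt κ * a) *
        Real.cos (Real.sqrt κ * b)) /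
      (Real.sin (Real.sqrt κ * a) * Real.sin (Real.sqrt κ * b)))

/-- The upper angle at `p` between the paths `σ` and `τ` issuing from `p`, measured by
comparison triangles in the model space `M_κ²`:
`lim_{ε→0} sup_{0<t,t<ε} ∠_p^{(κ)}(σ t, τ t)`.  Since the supremum is monotone in
`ε`, the limit is the infimum over `ε > 0`. -/
noncomputable def alexAngleWith (κ : ℝ) {X : Type*} [MetricSpace X] (p : X)
    (σ τ : ℝ → X) : ℝ :=
  ⨅ ε : {e : ℝ // 0 < e},
    sSup (Set.image
        (fun tt : ℝ × ℝ => cmpAngle κ (dist p (σ tt.1)) (dist p (τ tt.2)) (dist (σ tt.1) (τ tt.2)))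
        (Set.Ioo 0 (ε : ℝ) ×ˢ Set.Ioo 0 (ε : ℝ)))

open Real

set_option maxHeartbeats 1000000


lemma my_sinh_le_mul_cosh {x : ℝ} (hx : 0 ≤ x) : Real.sinh x ≤ x * Real.cosh x := by
  have hmono : MonotoneOn (fun y : ℝ => y * Real.cosh y - Real.sinh y) (Set.Ici 0) := by
    apply monotoneOn_of_deriv_nonneg (convex_Ici 0)
    · fun_prop
    · apply DifferentiableOn.sub
      · exact (differentiable_id.mul Real.differentiable_cosh).differentiableOn
      · exact Real.differentiable_sinh.differentiableOn
    · intro y hy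
      have hd : HasDerivAt (fun y : ℝ => y * Real.cosh y - Real.sinh y)
          (1 * Real.cosh y + y * Real.sinh y - Real.cosh y) y :=
        ((hasDerivAt_id y).mul (Real.hasDerivAt_cosh y)).sub (Real.hasDerivAt_sinh y)
      rw [hd.deriv]
      have hy' : 0 ≤ y := le_of_lt (by simpa using hy)
      have h0 : (0:ℝ) ≤ Real.sinh y := le_trans hy' (Real.self_le_sinh_iff.mpr hy')
      nlinarith
  have := hmono (Set.self_mem_Ici) (Set.mem_Ici.mpr hx) hx
  simp at this
  linarith

lemma my_sinh_le {x M : ℝ} (hx : 0 ≤ x) (hM : x ≤ M) : Real.sinh x ≤ x * Real.cosh M := by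
  refine (my_sinh_le_mul_cosh hx).trans ?_
  have : Real.cosh x ≤ Real.cosh M := Real.cosh_le_cosh.mpr (by
    rw [abs_of_nonneg hx, abs_of_nonneg (hx.trans hM)]; exact hM)
  nlinarith

lemma my_mul_cos_le_sin {x M : ℝ} (hx : 0 ≤ x) (hM : x ≤ M) (hM2 : M < π/2) :
    x * Real.cos M ≤ Real.sin x := by
  have hx2 : x < π/2 := lt_of_le_of_lt hM hM2
  have hcos : 0 < Real.cos x := Real.cos_pos_of_mem_Ioo ⟨by linarith [Real.pi_pos], hx2⟩
  have htan := Real.le_tan hx hx2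
  rw [Real.tan_eq_sin_div_cos] at htan
  have h1 : x * Real.cos x ≤ Real.sin x := by
    have := (le_div_iff₀ hcos).mp htan
    linarith
  refine le_trans ?_ h1
  have : Real.cos M ≤ Real.cos x := Real.cos_le_cos_of_nonneg_of_le_pi hx (by linarith [Real.pi_pos]) hM
  nlinarith

lemma my_cosh_sub_cosh (x y : ℝ) :
    Real.cosh x - Real.cosh y = 2 * Real.sinh ((x + y) / 2) * Real.sinh ((x - y) / 2) := by
  have h1 : Real.cosh x = Real.cosh ((x + y) / 2 + (x - y) / 2) := by ring_nf
  have h2 : Real.cosh y = Real.cosh ((x + y) / 2 - (x - y) / 2) := by ring_nf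
  rw [h1, h2, Real.cosh_add, Real.cosh_sub]
  ring

lemma auxA1 (a b c d : ℝ) (h2 : 0 ≤ d) (h1 : d ≤ c) (hd2 : d^2 = (a-b)^2) :
    0 ≤ c^2 - (a-b)^2 := by nlinarith

lemma auxA2 (a b c : ℝ) (hc0 : 0 ≤ c) (hc2 : c ≤ a + b) :
    c^2 - (a-b)^2 ≤ 2*(2*a*b) := by nlinarith

lemma auxA3 {x : ℝ} (hx : 1 ≤ x) : 1 ≤ x^2 := by nlinarith

lemma auxdiv (E u : ℝ) (hE0 : 0 ≤ E) (hu : 1 ≤ u) : E - E/u ≤ E*(u-1) := by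
  have hu0 : (0:ℝ) < u := lt_of_lt_of_le one_pos hu
  rw [sub_le_iff_le_add, ← sub_le_iff_le_add', le_div_iff₀ hu0]
  nlinarith [mul_nonneg (mul_nonneg hE0 (by linarith : (0:ℝ) ≤ u - 1)) (by linarith : (0:ℝ) ≤ u - 1)]

lemma auxA4 {x : ℝ} (h0 : 0 < x) (h1 : x ≤ 1) : 1 ≤ 1 / x^2 := by
  rw [le_div_iff₀ (by positivity)]
  nlinarith

lemma sandwich (E Q u : ℝ) (hE0 : 0 ≤ E) (hE2 : E ≤ 2) (hu : 1 ≤ u)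
    (h1 : Q ≤ E * u) (h2 : E / u ≤ Q) : |E - Q| ≤ 2*(u - 1) := by
  have hu1 : (0:ℝ) ≤ u - 1 := by linarith
  have t1 : E * (u-1) ≤ 2 * (u-1) := mul_le_mul_of_nonneg_right hE2 hu1
  have hexp : E * u - E = E * (u-1) := by ring
  have hstep := auxdiv E u hE0 hu
  rw [abs_le]
  constructor <;> linarith

lemma auxE (s a b c d : ℝ) (hs : 0 < s) (ha : 0 < a) (hb : 0 < b) (hd2 : d^2 = (a-b)^2) :
    (c^2 - (a-b)^2) / (2*a*b) = 2*(s*(c+d)/2)*(s*(c-d)/2) / ((s*a)*(s*b)) := by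
  field_simp
  linear_combination hd2

lemma eucl_range (a b c : ℝ) (ha : 0 < a) (hb : 0 < b)
    (hc1 : |a - b| ≤ c) (hc2 : c ≤ a + b) :
    -1 ≤ (a^2 + b^2 - c^2)/(2*a*b) ∧ (a^2 + b^2 - c^2)/(2*a*b) ≤ 1 := by
  have hd2 : |a-b|^2 = (a-b)^2 := sq_abs _
  have hc0 : 0 ≤ c := (abs_nonneg _).trans hc1
  have hab : (0:ℝ) < 2*a*b := by positivity
  constructor
  · rw [neg_le, ← neg_div, div_le_one hab]
    nlinarith
  · rw [div_le_one hab]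
    nlinarith [abs_nonneg (a-b)]

lemma hyper_core (s M a b c : ℝ) (hs : 0 < s) (ha : 0 < a) (hb : 0 < b)
    (hc1 : |a - b| ≤ c) (hc2 : c ≤ a + b)
    (hA : s * a ≤ M) (hB : s * b ≤ M) (hP : s * (c + |a - b|) / 2 ≤ M) :
    (-1 ≤ (Real.cosh (s*a) * Real.cosh (s*b) - Real.cosh (s*c)) /
        (Real.sinh (s*a) * Real.sinh (s*b)) ∧
      (Real.cosh (s*a) * Real.cosh (s*b) - Real.cosh (s*c)) /
        (Real.sinh (s*a) * Real.sinh (s*b)) ≤ 1) ∧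
    |(Real.cosh (s*a) * Real.cosh (s*b) - Real.cosh (s*c)) /
        (Real.sinh (s*a) * Real.sinh (s*b)) - (a^2 + b^2 - c^2)/(2*a*b)|
      ≤ 2 * (Real.cosh M ^ 2 - 1) := by
  have hd0 : (0:ℝ) ≤ |a - b| := abs_nonneg _
  have hd2 : |a - b|^2 = (a-b)^2 := sq_abs _
  have hc0 : 0 ≤ c := hd0.trans hc1
  set d := |a - b| with hdd
  set P1 := s*(c+d)/2 with hP1d
  set P2 := s*(c-d)/2 with hP2d
  have hP10 : 0 ≤ P1 := by positivity
  have hP20 : 0 ≤ P2 := by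
    have : 0 ≤ c - d := by linarith
    positivity
  have hP1M : P1 ≤ M := hP
  have hP21 : P2 ≤ P1 := by
    rw [hP1d, hP2d]
    have h1 : c - d ≤ c + d := by linarith
    have := mul_le_mul_of_nonneg_left h1 (le_of_lt hs)
    linarith
  have hP2M : P2 ≤ M := le_trans hP21 hP1M
  set E := (c^2 - (a-b)^2) / (2*a*b) with hE
  have hab : (0:ℝ) < 2*a*b := by positivity
  have hE0 : 0 ≤ E := div_nonneg (auxA1 a b c d hd0 hc1 hd2) (le_of_lt hab)
  have hE2 : E ≤ 2 := by
    rw [hE, div_le_iff₀ hab]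
    exact auxA2 a b c hc0 hc2
  have hC0eq : (a^2+b^2-c^2)/(2*a*b) = 1 - E := by
    rw [hE]; field_simp; ring
  -- numerator identity
  have hsd : s * d = |s*a - s*b| := by
    rw [hdd, ← mul_sub, abs_mul, abs_of_pos hs]
  have hcoshd : Real.cosh (s*d) = Real.cosh (s*a) * Real.cosh (s*b)
      - Real.sinh (s*a) * Real.sinh (s*b) := by
    rw [hsd, Real.cosh_abs, Real.cosh_sub]
  have hsplit : Real.cosh (s*c) - Real.cosh (s*d) = 2 * Real.sinh P1 * Real.sinh P2 := by
    have := my_cosh_sub_cosh (s*c) (s*d)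
    have e1 : (s*c + s*d)/2 = P1 := by rw [hP1d]; ring
    have e2 : (s*c - s*d)/2 = P2 := by rw [hP2d]; ring
    rwa [e1, e2] at this
  have hnum : Real.cosh (s*a) * Real.cosh (s*b) - Real.cosh (s*c)
      = Real.sinh (s*a) * Real.sinh (s*b) - 2 * Real.sinh P1 * Real.sinh P2 := by
    linarith
  have hsa : 0 < Real.sinh (s*a) := Real.sinh_pos_iff.mpr (by positivity)
  have hsb : 0 < Real.sinh (s*b) := Real.sinh_pos_iff.mpr (by positivity)
  have hden : 0 < Real.sinh (s*a) * Real.sinh (s*b) := mul_pos hsa hsb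
  set Q := (2 * Real.sinh P1 * Real.sinh P2) / (Real.sinh (s*a) * Real.sinh (s*b)) with hQ
  have hQeq : (Real.cosh (s*a) * Real.cosh (s*b) - Real.cosh (s*c)) /
      (Real.sinh (s*a) * Real.sinh (s*b)) = 1 - Q := by
    rw [hnum, hQ]; field_simp
  -- bounds
  have hcM : (1:ℝ) ≤ Real.cosh M := Real.one_le_cosh M
  have hsP1le : Real.sinh P1 ≤ P1 * Real.cosh M := my_sinh_le hP10 hP1M
  have hsP2le : Real.sinh P2 ≤ P2 * Real.cosh M := my_sinh_le hP20 hP2M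
  have hsP1ge : P1 ≤ Real.sinh P1 := Real.self_le_sinh_iff.mpr hP10
  have hsP2ge : P2 ≤ Real.sinh P2 := Real.self_le_sinh_iff.mpr hP20
  have hsage : s*a ≤ Real.sinh (s*a) := Real.self_le_sinh_iff.mpr (by positivity)
  have hsbge : s*b ≤ Real.sinh (s*b) := Real.self_le_sinh_iff.mpr (by positivity)
  have hsale : Real.sinh (s*a) ≤ (s*a) * Real.cosh M := my_sinh_le (by positivity) hA
  have hsble : Real.sinh (s*b) ≤ (s*b) * Real.cosh M := my_sinh_le (by positivity) hB
  have hsab : (0:ℝ) < (s*a)*(s*b) := by positivity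
  have hEeq : E = 2*P1*P2 / ((s*a)*(s*b)) := by
    rw [hE, hP1d, hP2d]
    field_simp
    linear_combination hd2
  have hsnn1 : 0 ≤ Real.sinh P1 := hP10.trans hsP1ge
  have hsnn2 : 0 ≤ Real.sinh P2 := hP20.trans hsP2ge
  have hup : Real.sinh P1 * Real.sinh P2 ≤ (P1 * Real.cosh M) * (P2 * Real.cosh M) :=
    mul_le_mul hsP1le hsP2le hsnn2 (by positivity)
  have hlo : P1 * P2 ≤ Real.sinh P1 * Real.sinh P2 :=
    mul_le_mul hsP1ge hsP2ge hP20 hsnn1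
  have hdlo : (s*a)*(s*b) ≤ Real.sinh (s*a) * Real.sinh (s*b) :=
    mul_le_mul hsage hsbge (by positivity) (le_of_lt hsa)
  have hdup : Real.sinh (s*a) * Real.sinh (s*b) ≤ ((s*a) * Real.cosh M)*((s*b) * Real.cosh M) :=
    mul_le_mul hsale hsble (le_of_lt hsb) (by positivity)
  have hQle : Q ≤ E * Real.cosh M^2 := by
    have h1 : Q ≤ (2*(P1 * Real.cosh M)*(P2 * Real.cosh M)) / ((s*a)*(s*b)) := by
      apply div_le_div₀ (by positivity) (by linarith [hup]) hsab hdlo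
    calc Q ≤ _ := h1
      _ = E * Real.cosh M^2 := by rw [hEeq, div_mul_eq_mul_div]; ring
  have hQge : E / Real.cosh M^2 ≤ Q := by
    have h1 : (2*P1*P2) / (((s*a)*Real.cosh M)*((s*b)*Real.cosh M)) ≤ Q := by
      apply div_le_div₀ (by positivity) (by linarith [hlo]) hden hdup
    calc E / Real.cosh M^2 = (2*P1*P2) / (((s*a)*Real.cosh M)*((s*b)*Real.cosh M)) := by
          rw [hEeq, div_div]; ring_nf
      _ ≤ Q := h1
  have hcM2 : (1:ℝ) ≤ Real.cosh M^2 := auxA3 hcM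
  have hQ0 : 0 ≤ Q := by
    rw [hQ]
    apply div_nonneg _ (le_of_lt hden)
    positivity
  refine ⟨⟨?_, ?_⟩, ?_⟩
  · rw [le_div_iff₀ hden]
    have hsc : s*c ≤ s*a + s*b := by
      have := mul_le_mul_of_nonneg_left hc2 (le_of_lt hs)
      linarith [mul_add s a b]
    have hccc : Real.cosh (s*c) ≤ Real.cosh (s*a + s*b) := by
      rw [Real.cosh_le_cosh, abs_of_nonneg (by positivity : (0:ℝ) ≤ s*c),
        abs_of_nonneg (by positivity : (0:ℝ) ≤ s*a + s*b)]
      exact hsc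
    rw [Real.cosh_add] at hccc
    linarith
  · rw [hQeq]; linarith
  · rw [hQeq, hC0eq, show (1 - Q) - (1 - E) = E - Q by ring]
    exact sandwich E Q _ hE0 hE2 hcM2 hQle hQge

lemma spher_core (s M a b c : ℝ) (hs : 0 < s) (ha : 0 < a) (hb : 0 < b)
    (hc1 : |a - b| ≤ c) (hc2 : c ≤ a + b)
    (hA : s * a ≤ M) (hB : s * b ≤ M) (hP : s * (c + |a - b|) / 2 ≤ M)
    (hsc : s * c ≤ 2 * M) (hM : M < π/2) :
    (-1 ≤ (Real.cos (s*c) - Real.cos (s*a) * Real.cos (s*b)) /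
        (Real.sin (s*a) * Real.sin (s*b)) ∧
      (Real.cos (s*c) - Real.cos (s*a) * Real.cos (s*b)) /
        (Real.sin (s*a) * Real.sin (s*b)) ≤ 1) ∧
    |(Real.cos (s*c) - Real.cos (s*a) * Real.cos (s*b)) /
        (Real.sin (s*a) * Real.sin (s*b)) - (a^2 + b^2 - c^2)/(2*a*b)|
      ≤ 2 * (1 / Real.cos M ^ 2 - 1) := by
  have hd0 : (0:ℝ) ≤ |a - b| := abs_nonneg _
  have hd2 : |a - b|^2 = (a-b)^2 := sq_abs _
  have hc0 : 0 ≤ c := hd0.trans hc1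
  have hM0 : 0 < M := lt_of_lt_of_le (by positivity : (0:ℝ) < s*a) hA
  have hcosM : 0 < Real.cos M := Real.cos_pos_of_mem_Ioo ⟨by linarith, hM⟩
  have hcosM1 : Real.cos M ≤ 1 := Real.cos_le_one M
  set d := |a - b| with hdd
  set P1 := s*(c+d)/2 with hP1d
  set P2 := s*(c-d)/2 with hP2d
  have hP10 : 0 ≤ P1 := by positivity
  have hP20 : 0 ≤ P2 := by
    have : 0 ≤ c - d := by linarith
    positivity
  have hP1M : P1 ≤ M := hP
  have hP21 : P2 ≤ P1 := by
    rw [hP1d, hP2d]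
    have h1 : c - d ≤ c + d := by linarith
    have := mul_le_mul_of_nonneg_left h1 (le_of_lt hs)
    linarith
  have hP2M : P2 ≤ M := le_trans hP21 hP1M
  set E := (c^2 - (a-b)^2) / (2*a*b) with hE
  have hab : (0:ℝ) < 2*a*b := by positivity
  have hE0 : 0 ≤ E := div_nonneg (auxA1 a b c d hd0 hc1 hd2) (le_of_lt hab)
  have hE2 : E ≤ 2 := by
    rw [hE, div_le_iff₀ hab]
    exact auxA2 a b c hc0 hc2
  have hC0eq : (a^2+b^2-c^2)/(2*a*b) = 1 - E := by
    rw [hE]; field_simp; ring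
  -- numerator identity
  have hsd : s * d = |s*a - s*b| := by
    rw [hdd, ← mul_sub, abs_mul, abs_of_pos hs]
  have hcosd : Real.cos (s*d) = Real.cos (s*a) * Real.cos (s*b)
      + Real.sin (s*a) * Real.sin (s*b) := by
    rw [hsd, Real.cos_abs, Real.cos_sub]
  have hsplit : Real.cos (s*c) - Real.cos (s*d) = -(2 * Real.sin P1 * Real.sin P2) := by
    have := Real.cos_sub_cos (s*c) (s*d)
    have e1 : (s*c + s*d)/2 = P1 := by rw [hP1d]; ring
    have e2 : (s*c - s*d)/2 = P2 := by rw [hP2d]; ring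
    rw [e1, e2] at this
    linarith
  have hnum : Real.cos (s*c) - Real.cos (s*a) * Real.cos (s*b)
      = Real.sin (s*a) * Real.sin (s*b) - 2 * Real.sin P1 * Real.sin P2 := by
    linarith
  have hsa : 0 < Real.sin (s*a) :=
    Real.sin_pos_of_pos_of_lt_pi (by positivity) (by linarith [Real.pi_pos])
  have hsb : 0 < Real.sin (s*b) :=
    Real.sin_pos_of_pos_of_lt_pi (by positivity) (by linarith [Real.pi_pos])
  have hden : 0 < Real.sin (s*a) * Real.sin (s*b) := mul_pos hsa hsb
  set Q := (2 * Real.sin P1 * Real.sin P2) / (Real.sin (s*a) * Real.sin (s*b)) with hQ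
  have hQeq : (Real.cos (s*c) - Real.cos (s*a) * Real.cos (s*b)) /
      (Real.sin (s*a) * Real.sin (s*b)) = 1 - Q := by
    rw [hnum, hQ]; field_simp
  -- bounds
  have hsP1le : Real.sin P1 ≤ P1 := Real.sin_le hP10
  have hsP2le : Real.sin P2 ≤ P2 := Real.sin_le hP20
  have hsP1ge : P1 * Real.cos M ≤ Real.sin P1 := my_mul_cos_le_sin hP10 hP1M hM
  have hsP2ge : P2 * Real.cos M ≤ Real.sin P2 := my_mul_cos_le_sin hP20 hP2M hM
  have hsage : (s*a) * Real.cos M ≤ Real.sin (s*a) := my_mul_cos_le_sin (by positivity) hA hM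
  have hsbge : (s*b) * Real.cos M ≤ Real.sin (s*b) := my_mul_cos_le_sin (by positivity) hB hM
  have hsale : Real.sin (s*a) ≤ s*a := Real.sin_le (by positivity)
  have hsble : Real.sin (s*b) ≤ s*b := Real.sin_le (by positivity)
  have hsab : (0:ℝ) < (s*a)*(s*b) := by positivity
  have hEeq : E = 2*P1*P2 / ((s*a)*(s*b)) := by
    rw [hE, hP1d, hP2d]
    field_simp
    linear_combination hd2
  have hsnn1 : 0 ≤ Real.sin P1 := le_trans (by positivity) hsP1ge
  have hsnn2 : 0 ≤ Real.sin P2 := le_trans (by positivity) hsP2ge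
  have hup : Real.sin P1 * Real.sin P2 ≤ P1 * P2 :=
    mul_le_mul hsP1le hsP2le hsnn2 hP10
  have hlo : (P1 * Real.cos M) * (P2 * Real.cos M) ≤ Real.sin P1 * Real.sin P2 :=
    mul_le_mul hsP1ge hsP2ge (by positivity) hsnn1
  have hdlo : ((s*a) * Real.cos M)*((s*b) * Real.cos M) ≤ Real.sin (s*a) * Real.sin (s*b) :=
    mul_le_mul hsage hsbge (by positivity) (le_of_lt hsa)
  have hdup : Real.sin (s*a) * Real.sin (s*b) ≤ (s*a)*(s*b) :=
    mul_le_mul hsale hsble (le_of_lt hsb) (by positivity)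
  have hu1 : (1:ℝ) ≤ 1 / Real.cos M^2 := auxA4 hcosM hcosM1
  have hQle : Q ≤ E * (1 / Real.cos M^2) := by
    have h1 : Q ≤ (2*P1*P2) / (((s*a) * Real.cos M)*((s*b) * Real.cos M)) := by
      apply div_le_div₀ (by positivity) (by linarith [hup]) (by positivity) hdlo
    calc Q ≤ _ := h1
      _ = E * (1 / Real.cos M^2) := by
          rw [hEeq, div_mul_div_comm]
          congr 1
          · ring
          · ring
  have hQge : E / (1 / Real.cos M^2) ≤ Q := by
    have h1 : (2*(P1 * Real.cos M)*(P2 * Real.cos M)) / ((s*a)*(s*b)) ≤ Q := by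
      apply div_le_div₀ (by positivity) (by linarith [hlo]) hden hdup
    calc E / (1 / Real.cos M^2)
        = (2*(P1 * Real.cos M)*(P2 * Real.cos M)) / ((s*a)*(s*b)) := by
          rw [div_div_eq_mul_div, div_one, hEeq, div_mul_eq_mul_div]
          congr 1
          ring
      _ ≤ Q := h1
  have hQ0 : 0 ≤ Q := by
    rw [hQ]
    apply div_nonneg _ (le_of_lt hden)
    positivity
  refine ⟨⟨?_, ?_⟩, ?_⟩
  · rw [le_div_iff₀ hden]
    have hscab : s*c ≤ s*a + s*b := by
      have := mul_le_mul_of_nonneg_left hc2 (le_of_lt hs)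
      linarith [mul_add s a b]
    have hccc : Real.cos (s*a + s*b) ≤ Real.cos (s*c) := by
      apply Real.cos_le_cos_of_nonneg_of_le_pi (by positivity)
      · linarith [Real.pi_pos]
      · exact hscab
    rw [Real.cos_add] at hccc
    linarith
  · rw [hQeq]; linarith
  · rw [hQeq, hC0eq, show (1 - Q) - (1 - E) = E - Q by ring]
    exact sandwich E Q _ hE0 hE2 hu1 hQle hQge

lemma cmp_close (κ : ℝ) {δ : ℝ} (hδ : 0 < δ) :
    ∃ ε0 > 0, ∀ a b c : ℝ, 0 < a → a ≤ ε0 → 0 < b → b ≤ ε0 → |a - b| ≤ c → c ≤ a + b →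
      |cmpAngle κ a b c - cmpAngle 0 a b c| ≤ δ := by
  obtain ⟨η, hη, harc⟩ : ∃ η > 0, ∀ x ∈ Icc (-1:ℝ) 1, ∀ y ∈ Icc (-1:ℝ) 1,
      dist x y ≤ η → dist (Real.arccos x) (Real.arccos y) ≤ δ := by
    have h := (isCompact_Icc : IsCompact (Icc (-1:ℝ) 1)).uniformContinuousOn_of_continuous
      Real.continuous_arccos.continuousOn
    rw [Metric.uniformContinuousOn_iff_le] at h
    exact h δ hδ
  have e2 : ∀ a b c : ℝ, cmpAngle 0 a b c = Real.arccos ((a^2+b^2-c^2)/(2*a*b)) := by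
    intro a b c
    rw [cmpAngle, if_neg (lt_irrefl 0), if_pos rfl]
  rcases lt_trichotomy κ 0 with hκ | hκ | hκ
  · -- hyperbolic
    have hs : 0 < Real.sqrt (-κ) := Real.sqrt_pos.mpr (by linarith)
    set s := Real.sqrt (-κ) with hsdef
    have hcont : ContinuousAt (fun t : ℝ => 2*(Real.cosh (2*s*t)^2 - 1)) 0 := by fun_prop
    rw [Metric.continuousAt_iff] at hcont
    obtain ⟨r, hr, hball⟩ := hcont η hη
    refine ⟨r/2, by positivity, ?_⟩
    intro a b c ha haε hb hbε hc1 hc2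
    have hfM : 2*(Real.cosh (2*s*(r/2))^2 - 1) ≤ η := by
      have h1 : dist (r/2) (0:ℝ) < r := by
        rw [Real.dist_eq, sub_zero, abs_of_pos (by positivity)]; linarith
      have h2 := hball h1
      rw [Real.dist_eq] at h2
      simp only [mul_zero, Real.cosh_zero, one_pow] at h2
      rw [abs_lt] at h2
      linarith [h2.2]
    have hA : s*a ≤ 2*s*(r/2) := by nlinarith
    have hB : s*b ≤ 2*s*(r/2) := by nlinarith
    have hd : |a-b| ≤ r/2 := abs_le.mpr ⟨by linarith, by linarith⟩
    have hP : s*(c+|a-b|)/2 ≤ 2*s*(r/2) := by nlinarith [abs_nonneg (a-b)]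
    obtain ⟨⟨hX1, hX2⟩, hXY⟩ := hyper_core s (2*s*(r/2)) a b c hs ha hb hc1 hc2 hA hB hP
    obtain ⟨hY1, hY2⟩ := eucl_range a b c ha hb hc1 hc2
    have e1 : cmpAngle κ a b c = Real.arccos ((Real.cosh (s*a) * Real.cosh (s*b) -
        Real.cosh (s*c)) / (Real.sinh (s*a) * Real.sinh (s*b))) := by
      rw [cmpAngle, if_pos hκ]
    rw [e1, e2]
    have h := harc _ ⟨hX1, hX2⟩ _ ⟨hY1, hY2⟩
      (by rw [Real.dist_eq]; exact hXY.trans hfM)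
    rwa [Real.dist_eq] at h
  · subst hκ
    exact ⟨1, one_pos, fun a b c _ _ _ _ _ _ => by simp [sub_self, abs_zero, le_of_lt hδ]⟩
  · -- spherical
    have hs : 0 < Real.sqrt κ := Real.sqrt_pos.mpr hκ
    set s := Real.sqrt κ with hsdef
    have hcont : ContinuousAt (fun t : ℝ => 2*(1/Real.cos (2*s*t)^2 - 1)) 0 := by
      apply ContinuousAt.mul continuousAt_const
      apply ContinuousAt.sub _ continuousAt_const
      apply ContinuousAt.div continuousAt_const
      · fun_prop
      · simp
    rw [Metric.continuousAt_iff] at hcont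
    obtain ⟨r, hr, hball⟩ := hcont η hη
    have hpi := Real.pi_pos
    set ε0 := min (r/2) (π/(8*s)) with hε0def
    have hε0 : 0 < ε0 := lt_min (by positivity) (by positivity)
    refine ⟨ε0, hε0, ?_⟩
    intro a b c ha haε hb hbε hc1 hc2
    have hM : 2*s*ε0 < π/2 := by
      have h1 : ε0 ≤ π/(8*s) := min_le_right _ _
      have h2 : 2*s*ε0 ≤ 2*s*(π/(8*s)) := by nlinarith
      have h3 : 2*s*(π/(8*s)) = π/4 := by field_simp; ring
      linarith [h3 ▸ h2]
    have hfM : 2*(1/Real.cos (2*s*ε0)^2 - 1) ≤ η := by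
      have h1 : dist ε0 (0:ℝ) < r := by
        rw [Real.dist_eq, sub_zero, abs_of_pos hε0]
        calc ε0 ≤ r/2 := min_le_left _ _
          _ < r := by linarith
      have h2 := hball h1
      rw [Real.dist_eq] at h2
      simp only [mul_zero, Real.cos_zero, one_pow] at h2
      rw [abs_lt] at h2
      have : (1:ℝ)/1 - 1 = 0 := by norm_num
      linarith [h2.2]
    have hA : s*a ≤ 2*s*ε0 := by nlinarith
    have hB : s*b ≤ 2*s*ε0 := by nlinarith
    have hd : |a-b| ≤ ε0 := abs_le.mpr ⟨by linarith, by linarith⟩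
    have hP : s*(c+|a-b|)/2 ≤ 2*s*ε0 := by nlinarith [abs_nonneg (a-b)]
    have hsc : s*c ≤ 2*(2*s*ε0) := by nlinarith [(abs_nonneg (a-b)).trans hc1]
    obtain ⟨⟨hX1, hX2⟩, hXY⟩ := spher_core s (2*s*ε0) a b c hs ha hb hc1 hc2 hA hB hP hsc hM
    obtain ⟨hY1, hY2⟩ := eucl_range a b c ha hb hc1 hc2
    have e1 : cmpAngle κ a b c = Real.arccos ((Real.cos (s*c) - Real.cos (s*a) *
        Real.cos (s*b)) / (Real.sin (s*a) * Real.sin (s*b))) := by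
      rw [cmpAngle, if_neg (by linarith), if_neg (by linarith)]
    rw [e1, e2]
    have h := harc _ ⟨hX1, hX2⟩ _ ⟨hY1, hY2⟩
      (by rw [Real.dist_eq]; exact hXY.trans hfM)
    rwa [Real.dist_eq] at h

lemma cmpAngle_nonneg (κ a b c : ℝ) : 0 ≤ cmpAngle κ a b c := by
  rw [cmpAngle]; split_ifs <;> exact Real.arccos_nonneg _

lemma cmpAngle_le_pi (κ a b c : ℝ) : cmpAngle κ a b c ≤ π := by
  rw [cmpAngle]; split_ifs <;> exact Real.arccos_le_pi _

noncomputable def gfun {X : Type*} [MetricSpace X] (k : ℝ) (p : X) (σ τ : ℝ → X) : ℝ × ℝ → ℝ :=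
  fun tt => cmpAngle k (dist p (σ tt.1)) (dist p (τ tt.2)) (dist (σ tt.1) (τ tt.2))

lemma alexAngleWith_eq (k : ℝ) {X : Type*} [MetricSpace X] (p : X) (σ τ : ℝ → X) :
    alexAngleWith k p σ τ = ⨅ ε : {e : ℝ // 0 < e},
      sSup (gfun k p σ τ '' (Set.Ioo 0 (ε : ℝ) ×ˢ Set.Ioo 0 (ε : ℝ))) := rfl


/-- For any κ and any two geodesics issuing from `p` in a metric space,
the Alexandrov angle (defined by Euclidean comparison triangles, i.e. κ = 0) equals
the corresponding limit of comparison angles in the model space `M_κ²`. -/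
theorem alexAngle_model_indep (κ : ℝ) {X : Type*} [MetricSpace X]
    (p q r : X) (σ τ : ℝ → X) (Lσ Lτ : ℝ) (hLσ : 0 < Lσ) (hLτ : 0 < Lτ)
    (hσ0 : σ 0 = p) (hτ0 : τ 0 = p) (hσq : σ Lσ = q) (hτr : τ Lτ = r)
    (hσ : ∀ s ∈ Set.Icc 0 Lσ, ∀ t ∈ Set.Icc 0 Lσ, dist (σ s) (σ t) = |s - t|)
    (hτ : ∀ s ∈ Set.Icc 0 Lτ, ∀ t ∈ Set.Icc 0 Lτ, dist (τ s) (τ t) = |s - t|) :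
    alexAngleWith κ p σ τ = alexAngleWith 0 p σ τ := by
  have hLm : 0 < min Lσ Lτ := lt_min hLσ hLτ
  have hda : ∀ t ∈ Ioo (0:ℝ) (min Lσ Lτ), dist p (σ t) = t := by
    intro t ht
    rw [← hσ0, hσ 0 ⟨le_refl 0, hLσ.le⟩ t ⟨ht.1.le, (lt_of_lt_of_le ht.2 (min_le_left _ _)).le⟩,
      zero_sub, abs_neg, abs_of_nonneg ht.1.le]
  have hdb : ∀ t ∈ Ioo (0:ℝ) (min Lσ Lτ), dist p (τ t) = t := by
    intro t ht
    rw [← hτ0, hτ 0 ⟨le_refl 0, hLτ.le⟩ t ⟨ht.1.le, (lt_of_lt_of_le ht.2 (min_le_right _ _)).le⟩,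
      zero_sub, abs_neg, abs_of_nonneg ht.1.le]
  have hBddA : ∀ (k : ℝ) (S : Set (ℝ×ℝ)), BddAbove (gfun k p σ τ '' S) := by
    intro k S
    refine ⟨π, ?_⟩
    rintro y ⟨tt, -, rfl⟩
    exact cmpAngle_le_pi _ _ _ _
  have hne : ∀ ε : {e : ℝ // 0 < e},
      ((Ioo (0:ℝ) (ε:ℝ)) ×ˢ (Ioo (0:ℝ) (ε:ℝ))).Nonempty :=
    fun ε => ⟨((ε:ℝ)/2, (ε:ℝ)/2), ⟨⟨half_pos ε.2, half_lt_self ε.2⟩,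
      ⟨half_pos ε.2, half_lt_self ε.2⟩⟩⟩
  have hSup0 : ∀ (k : ℝ) (ε : {e : ℝ // 0 < e}),
      0 ≤ sSup (gfun k p σ τ '' ((Ioo (0:ℝ) (ε:ℝ)) ×ˢ (Ioo (0:ℝ) (ε:ℝ)))) := by
    intro k ε
    obtain ⟨tt, htt⟩ := hne ε
    exact le_trans (cmpAngle_nonneg _ _ _ _)
      (le_csSup (hBddA k _) (mem_image_of_mem _ htt))
  have hbdBelow : ∀ k : ℝ, BddBelow (Set.range fun ε : {e : ℝ // 0 < e} =>
      sSup (gfun k p σ τ '' ((Ioo (0:ℝ) (ε:ℝ)) ×ˢ (Ioo (0:ℝ) (ε:ℝ))))) := by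
    intro k
    refine ⟨0, ?_⟩
    rintro y ⟨ε, rfl⟩
    exact hSup0 k ε
  have hmono : ∀ (k : ℝ) (ε1 ε2 : {e : ℝ // 0 < e}), (ε1:ℝ) ≤ ε2 →
      sSup (gfun k p σ τ '' ((Ioo (0:ℝ) (ε1:ℝ)) ×ˢ (Ioo (0:ℝ) (ε1:ℝ)))) ≤
      sSup (gfun k p σ τ '' ((Ioo (0:ℝ) (ε2:ℝ)) ×ˢ (Ioo (0:ℝ) (ε2:ℝ)))) := by
    intro k ε1 ε2 h
    apply csSup_le_csSup (hBddA _ _) ((hne ε1).image _)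
    apply Set.image_mono
    exact Set.prod_mono (Ioo_subset_Ioo le_rfl h) (Ioo_subset_Ioo le_rfl h)
  have half : ∀ k1 k2 : ℝ,
      (∀ δ : ℝ, 0 < δ → ∃ ε0 > 0, ∀ a b c : ℝ, 0 < a → a ≤ ε0 → 0 < b → b ≤ ε0 →
        |a - b| ≤ c → c ≤ a + b → cmpAngle k1 a b c ≤ cmpAngle k2 a b c + δ) →
      alexAngleWith k1 p σ τ ≤ alexAngleWith k2 p σ τ := by
    intro k1 k2 hclose
    refine le_of_forall_pos_le_add ?_
    intro δ hδ
    obtain ⟨ε0, hε0, hcl⟩ := hclose δ hδ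
    have hε1 : 0 < min ε0 (min Lσ Lτ) := lt_min hε0 hLm
    have main : ∀ ε : {e : ℝ // 0 < e}, alexAngleWith k1 p σ τ ≤
        sSup (gfun k2 p σ τ '' ((Ioo (0:ℝ) (ε:ℝ)) ×ˢ (Ioo (0:ℝ) (ε:ℝ)))) + δ := by
      intro ε
      set ε' : {e : ℝ // 0 < e} := ⟨min (ε:ℝ) (min ε0 (min Lσ Lτ)), lt_min ε.2 hε1⟩ with hε'def
      have step1 : alexAngleWith k1 p σ τ ≤
          sSup (gfun k1 p σ τ '' ((Ioo (0:ℝ) (ε':ℝ)) ×ˢ (Ioo (0:ℝ) (ε':ℝ)))) := by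
        rw [alexAngleWith_eq]
        exact ciInf_le (hbdBelow k1) ε'
      have hε'L : (ε':ℝ) ≤ min Lσ Lτ := le_trans (min_le_right _ _) (min_le_right _ _)
      have hε'0 : (ε':ℝ) ≤ ε0 := le_trans (min_le_right _ _) (min_le_left _ _)
      have step2 : sSup (gfun k1 p σ τ '' ((Ioo (0:ℝ) (ε':ℝ)) ×ˢ (Ioo (0:ℝ) (ε':ℝ)))) ≤
          sSup (gfun k2 p σ τ '' ((Ioo (0:ℝ) (ε':ℝ)) ×ˢ (Ioo (0:ℝ) (ε':ℝ)))) + δ := by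
        apply csSup_le ((hne ε').image _)
        rintro y ⟨⟨t, t'⟩, ⟨ht, ht'⟩, rfl⟩
        have htm : t ∈ Ioo (0:ℝ) (min Lσ Lτ) := ⟨ht.1, lt_of_lt_of_le ht.2 hε'L⟩
        have ht'm : t' ∈ Ioo (0:ℝ) (min Lσ Lτ) := ⟨ht'.1, lt_of_lt_of_le ht'.2 hε'L⟩
        have hga : dist p (σ t) = t := hda t htm
        have hgb : dist p (τ t') = t' := hdb t' ht'm
        have h1 : |dist p (σ t) - dist p (τ t')| ≤ dist (σ t) (τ t') := by
          rw [dist_comm p (σ t), dist_comm p (τ t')]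
          exact abs_dist_sub_le _ _ _
        have h2 : dist (σ t) (τ t') ≤ dist p (σ t) + dist p (τ t') := by
          rw [dist_comm p (σ t)]
          exact dist_triangle _ _ _
        have hb1 : gfun k1 p σ τ (t, t') ≤ gfun k2 p σ τ (t, t') + δ := by
          apply hcl
          · rw [hga]; exact ht.1
          · rw [hga]; exact le_trans ht.2.le hε'0
          · rw [hgb]; exact ht'.1
          · rw [hgb]; exact le_trans ht'.2.le hε'0
          · exact h1
          · exact h2
        refine hb1.trans (add_le_add_left ?_ δ)
        exact le_csSup (hBddA k2 _) (mem_image_of_mem _ ⟨ht, ht'⟩)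
      have step3 : sSup (gfun k2 p σ τ '' ((Ioo (0:ℝ) (ε':ℝ)) ×ˢ (Ioo (0:ℝ) (ε':ℝ)))) ≤
          sSup (gfun k2 p σ τ '' ((Ioo (0:ℝ) (ε:ℝ)) ×ˢ (Ioo (0:ℝ) (ε:ℝ)))) :=
        hmono k2 ε' ε (min_le_left _ _)
      linarith
    have hfin : alexAngleWith k1 p σ τ - δ ≤ alexAngleWith k2 p σ τ := by
      rw [alexAngleWith_eq k2 p σ τ]
      apply le_ciInf
      intro ε
      linarith [main ε]
    linarith
  apply le_antisymm
  · apply half κ 0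
    intro δ hδ
    obtain ⟨ε0, hε0, hcl⟩ := cmp_close κ hδ
    refine ⟨ε0, hε0, fun a b c h1 h2 h3 h4 h5 h6 => ?_⟩
    have := hcl a b c h1 h2 h3 h4 h5 h6
    rw [abs_le] at this
    linarith [this.2]
  · apply half 0 κ
    intro δ hδ
    obtain ⟨ε0, hε0, hcl⟩ := cmp_close κ hδ
    refine ⟨ε0, hε0, fun a b c h1 h2 h3 h4 h5 h6 => ?_⟩
    have := hcl a b c h1 h2 h3 h4 h5 h6
    rw [abs_le] at this
    linarith [this.1]
end

section
/- Let X be a metric space and c, c', c'' three geodesic paths in X issuing from the same point p. Then the Alexandrov angles satisfy the triangle inequality ∠(c',c'') ≤ ∠(c,c') + ∠(c,c''). -/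
open Set

private lemma cmpAngle_zero (a b c : ℝ) :
    cmpAngle 0 a b c = Real.arccos ((a ^ 2 + b ^ 2 - c ^ 2) / (2 * a * b)) := by
  simp [cmpAngle]

private lemma cmpAngle_zero_nonneg (a b c : ℝ) : 0 ≤ cmpAngle 0 a b c := by
  rw [cmpAngle_zero]; exact Real.arccos_nonneg _

private lemma cmpAngle_zero_le_pi (a b c : ℝ) : cmpAngle 0 a b c ≤ Real.pi := by
  rw [cmpAngle_zero]; exact Real.arccos_le_pi _

private lemma quot_bounds {a b d : ℝ} (ha : 0 < a) (hb : 0 < b)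
    (h1 : |a - b| ≤ d) (h2 : d ≤ a + b) :
    -1 ≤ (a ^ 2 + b ^ 2 - d ^ 2) / (2 * a * b) ∧
      (a ^ 2 + b ^ 2 - d ^ 2) / (2 * a * b) ≤ 1 := by
  have hd : 0 ≤ d := (abs_nonneg _).trans h1
  have h1' : (a - b) ^ 2 ≤ d ^ 2 := by
    nlinarith [mul_self_le_mul_self (abs_nonneg (a - b)) h1, sq_abs (a - b)]
  constructor
  · rw [neg_le, ← neg_div, div_le_one (by positivity)]; nlinarith
  · rw [div_le_one (by positivity)]; nlinarith

private lemma sq_cmp_le {a b d θ : ℝ} (ha : 0 < a) (hb : 0 < b)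
    (h1 : |a - b| ≤ d) (h2 : d ≤ a + b) (hθ : θ ≤ Real.pi)
    (h : cmpAngle 0 a b d ≤ θ) :
    d ^ 2 ≤ a ^ 2 + b ^ 2 - 2 * a * b * Real.cos θ := by
  obtain ⟨hq1, hq2⟩ := quot_bounds ha hb h1 h2
  have hca := Real.cos_arccos hq1 hq2
  have hm := Real.cos_le_cos_of_nonneg_of_le_pi (Real.arccos_nonneg _) hθ
    (by rwa [cmpAngle_zero] at h)
  rw [hca] at hm
  have hab : (0:ℝ) < 2 * a * b := by positivity
  rw [le_div_iff₀ hab] at hm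
  nlinarith

private lemma sq_cmp_gt {a b d θ : ℝ} (ha : 0 < a) (hb : 0 < b)
    (h1 : |a - b| ≤ d) (h2 : d ≤ a + b) (hθ : 0 ≤ θ)
    (h : θ < cmpAngle 0 a b d) :
    a ^ 2 + b ^ 2 - 2 * a * b * Real.cos θ < d ^ 2 := by
  obtain ⟨hq1, hq2⟩ := quot_bounds ha hb h1 h2
  have hca := Real.cos_arccos hq1 hq2
  have hm := Real.cos_lt_cos_of_nonneg_of_le_pi hθ (Real.arccos_le_pi _)
    (by rwa [cmpAngle_zero] at h)
  rw [hca] at hm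
  have hab : (0:ℝ) < 2 * a * b := by positivity
  rw [div_lt_iff₀ hab] at hm
  nlinarith

private lemma le_of_sq_le'' {x y : ℝ} (h : x ^ 2 ≤ y ^ 2) (hy : 0 ≤ y) : x ≤ y := by
  nlinarith [le_abs_self x, sq_abs x, abs_nonneg x]

private lemma lt_of_sq_lt'' {x y : ℝ} (h : x ^ 2 < y ^ 2) (hx : 0 ≤ x) (hy : 0 ≤ y) :
    x < y := by
  nlinarith

private lemma convex_sq_bound {l r s cφ sφ : ℝ} (hl0 : 0 ≤ l) (hl1 : l ≤ 1)
    (hr : 0 ≤ r) (hs : 0 ≤ s) (hcφ1 : cφ ≤ 1) (pφ : sφ ^ 2 + cφ ^ 2 = 1) :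
    ((1 - l) * r + l * (s * cφ)) ^ 2 + (l * (s * sφ)) ^ 2 ≤ ((1 - l) * r + l * s) ^ 2 := by
  have pφ' : (l * s) ^ 2 * sφ ^ 2 + (l * s) ^ 2 * cφ ^ 2 = (l * s) ^ 2 := by
    linear_combination (l * s) ^ 2 * pφ
  nlinarith [mul_nonneg (mul_nonneg (mul_nonneg (mul_nonneg
    (sub_nonneg.2 hl1) hl0) hr) hs) (sub_nonneg.2 hcφ1), pφ']

private lemma model {r s ψ χ : ℝ} (hr : 0 < r) (hs : 0 < s) (hψ : 0 < ψ) (hχ : 0 < χ)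
    (hsum : ψ + χ < Real.pi) :
    ∃ t u v w : ℝ, 0 < t ∧ t ≤ max r s ∧ 0 ≤ u ∧ 0 ≤ v ∧ 0 ≤ w ∧
      u ^ 2 = r ^ 2 + t ^ 2 - 2 * r * t * Real.cos ψ ∧
      v ^ 2 = s ^ 2 + t ^ 2 - 2 * s * t * Real.cos χ ∧
      w ^ 2 = r ^ 2 + s ^ 2 - 2 * r * s * Real.cos (ψ + χ) ∧
      u + v = w := by
  have hsψ : 0 < Real.sin ψ := Real.sin_pos_of_pos_of_lt_pi hψ (by linarith)
  have hsχ : 0 < Real.sin χ := Real.sin_pos_of_pos_of_lt_pi hχ (by linarith)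
  have hsφpos : 0 < Real.sin (ψ + χ) :=
    Real.sin_pos_of_pos_of_lt_pi (by linarith) hsum
  obtain ⟨cψ, hcψdef⟩ : ∃ x, x = Real.cos ψ := ⟨_, rfl⟩
  obtain ⟨sψ, hsψdef⟩ : ∃ x, x = Real.sin ψ := ⟨_, rfl⟩
  obtain ⟨cχ, hcχdef⟩ : ∃ x, x = Real.cos χ := ⟨_, rfl⟩
  obtain ⟨sχ, hsχdef⟩ : ∃ x, x = Real.sin χ := ⟨_, rfl⟩
  rw [← hsψdef] at hsψ
  rw [← hsχdef] at hsχ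
  obtain ⟨cφ, hcφ2⟩ : ∃ x, x = cψ * cχ - sψ * sχ := ⟨_, rfl⟩
  obtain ⟨sφ, hsφ2⟩ : ∃ x, x = sψ * cχ + cψ * sχ := ⟨_, rfl⟩
  have hcφ : Real.cos (ψ + χ) = cφ := by
    rw [hcφ2, hcψdef, hsψdef, hcχdef, hsχdef]; exact Real.cos_add ψ χ
  have hsφeq : Real.sin (ψ + χ) = sφ := by
    rw [hsφ2, hcψdef, hsψdef, hcχdef, hsχdef]; exact Real.sin_add ψ χ
  have p1 : sψ ^ 2 + cψ ^ 2 = 1 := by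
    rw [hsψdef, hcψdef]; exact Real.sin_sq_add_cos_sq ψ
  have p2 : sχ ^ 2 + cχ ^ 2 = 1 := by
    rw [hsχdef, hcχdef]; exact Real.sin_sq_add_cos_sq χ
  obtain ⟨D, hD⟩ : ∃ x, x = r * sψ + s * sχ := ⟨_, rfl⟩
  have hD0 : 0 < D := by rw [hD]; positivity
  obtain ⟨l, hl⟩ : ∃ x, x = r * sψ / D := ⟨_, rfl⟩
  have hl0 : 0 < l := by rw [hl]; positivity
  have hl1 : l < 1 := by
    rw [hl, div_lt_one hD0, hD]
    have := mul_pos hs hsχ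
    linarith
  have hsφ0 : 0 < sφ := by rw [← hsφeq]; exact hsφpos

  clear hsψdef hsχdef hsφpos hsum
  have pφ : sφ ^ 2 + cφ ^ 2 = 1 := by
    rw [hsφ2, hcφ2]; linear_combination (sχ ^ 2 + cχ ^ 2) * p1 + p2
  have hcφ1 : cφ ≤ 1 := by nlinarith [sq_nonneg (cφ - 1), sq_nonneg sφ]
  obtain ⟨Z1, hZ1def⟩ : ∃ x, x = (1 - l) * r + l * (s * cφ) := ⟨_, rfl⟩
  obtain ⟨Z2, hZ2def⟩ : ∃ x, x = l * (s * sφ) := ⟨_, rfl⟩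
  obtain ⟨t, htdef⟩ : ∃ x, x = Z1 * cψ + Z2 * sψ := ⟨_, rfl⟩
  have hlD : l * D = r * sψ := by rw [hl]; field_simp
  have h1l : (1 - l) * D = s * sχ := by rw [hl]; field_simp [hD]; linarith
  have hf : Z1 * sψ - Z2 * cψ = 0 := by
    have hcs : cφ * sψ - sφ * cψ = -sχ := by
      rw [hcφ2, hsφ2]; linear_combination (-sχ) * p1
    have expand : (Z1 * sψ - Z2 * cψ) * D =
        ((1 - l) * D) * (r * sψ) + (l * D) * (s * (cφ * sψ - sφ * cψ)) := by
      rw [hZ1def, hZ2def]; ring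
    rw [h1l, hlD, hcs] at expand
    have hz : (Z1 * sψ - Z2 * cψ) * D = 0 := by rw [expand]; ring
    exact (mul_eq_zero.mp hz).resolve_right hD0.ne'
  have hZ1 : Z1 = t * cψ := by rw [htdef]; linear_combination sψ * hf - Z1 * p1
  have hZ2 : Z2 = t * sψ := by rw [htdef]; linear_combination (-cψ) * hf - Z2 * p1
  have hZ2pos : 0 < Z2 := by rw [hZ2def]; positivity
  have ht0 : 0 < t := by
    rw [hZ2] at hZ2pos
    rcases mul_pos_iff.mp hZ2pos with ⟨h1, _⟩ | ⟨_, h2⟩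
    · exact h1
    · linarith
  have htM : t ≤ max r s := by
    have h1lr : 0 < 1 - l := by linarith
    have hM0 : 0 < (1 - l) * r + l * s := by positivity
    have ht2 : t ^ 2 = Z1 ^ 2 + Z2 ^ 2 := by
      rw [hZ1, hZ2]; linear_combination (-t ^ 2) * p1
    have ht2le : t ^ 2 ≤ ((1 - l) * r + l * s) ^ 2 := by
      rw [ht2, hZ1def, hZ2def]
      exact convex_sq_bound hl0.le hl1.le hr.le hs.le hcφ1 pφ
    have htle : t ≤ (1 - l) * r + l * s := le_of_sq_le'' ht2le hM0.le
    have hmax : (1 - l) * r + l * s ≤ max r s := by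
      have h1 := mul_le_mul_of_nonneg_left (le_max_left r s) h1lr.le
      have h2 := mul_le_mul_of_nonneg_left (le_max_right r s) hl0.le
      linarith
    linarith
  obtain ⟨w, hwdef⟩ : ∃ x, x = Real.sqrt (r ^ 2 + s ^ 2 - 2 * r * s * cφ) := ⟨_, rfl⟩
  have hwarg : 0 ≤ r ^ 2 + s ^ 2 - 2 * r * s * cφ := by
    nlinarith [sq_nonneg (r - s), mul_pos hr hs]
  have hw0 : 0 ≤ w := by rw [hwdef]; exact Real.sqrt_nonneg _
  have hw2 : w ^ 2 = r ^ 2 + s ^ 2 - 2 * r * s * cφ := by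
    rw [hwdef]; exact Real.sq_sqrt hwarg
  refine ⟨t, l * w, (1 - l) * w, w, ht0, htM, by positivity,
    mul_nonneg (by linarith) hw0, hw0, ?_, ?_, ?_, by ring⟩
  · have key : (l * w) ^ 2 = (r - Z1) ^ 2 + Z2 ^ 2 := by
      rw [hZ1def, hZ2def]
      linear_combination l ^ 2 * hw2 - l ^ 2 * s ^ 2 * pφ
    rw [key, hZ1, hZ2, ← hcψdef]
    linear_combination t ^ 2 * p1
  · have key : ((1 - l) * w) ^ 2 = (s * cφ - Z1) ^ 2 + (s * sφ - Z2) ^ 2 := by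
      rw [hZ1def, hZ2def]
      linear_combination (1 - l) ^ 2 * hw2 - (1 - l) ^ 2 * s ^ 2 * pφ
    rw [key, hZ1, hZ2, hcφ2, hsφ2, ← hcχdef]
    linear_combination (s ^ 2 * (sχ ^ 2 + cχ ^ 2) - 2 * s * t * cχ + t ^ 2) * p1 + s ^ 2 * p2
  · rw [hw2, hcφ]

/-- The set of comparison angles for parameters below `ε`. -/
private def angS {X : Type*} [MetricSpace X] (p : X) (σ τ : ℝ → X) (ε : ℝ) : Set ℝ :=
  Set.image
    (fun tt : ℝ × ℝ => cmpAngle 0 (dist p (σ tt.1)) (dist p (τ tt.2)) (dist (σ tt.1) (τ tt.2)))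
    (Set.Ioo 0 ε ×ˢ Set.Ioo 0 ε)

private lemma alex_eq {X : Type*} [MetricSpace X] (p : X) (σ τ : ℝ → X) :
    alexAngleWith 0 p σ τ = ⨅ ε : {e : ℝ // 0 < e}, sSup (angS p σ τ (ε : ℝ)) := rfl

private lemma angS_nonempty {X : Type*} [MetricSpace X] (p : X) (σ τ : ℝ → X) {ε : ℝ}
    (hε : 0 < ε) : (angS p σ τ ε).Nonempty :=
  ⟨_, ⟨(ε / 2, ε / 2), ⟨⟨half_pos hε, half_lt_self hε⟩, ⟨half_pos hε, half_lt_self hε⟩⟩, rfl⟩⟩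

private lemma angS_subset {X : Type*} [MetricSpace X] (p : X) (σ τ : ℝ → X) (ε : ℝ) :
    angS p σ τ ε ⊆ Set.Icc 0 Real.pi := by
  rintro x ⟨tt, -, rfl⟩
  exact ⟨cmpAngle_zero_nonneg _ _ _, cmpAngle_zero_le_pi _ _ _⟩

private lemma angS_bdd {X : Type*} [MetricSpace X] (p : X) (σ τ : ℝ → X) (ε : ℝ) :
    BddAbove (angS p σ τ ε) :=
  BddAbove.mono (angS_subset p σ τ ε) bddAbove_Icc

private lemma sSup_angS_nonneg {X : Type*} [MetricSpace X] (p : X) (σ τ : ℝ → X) {ε : ℝ}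
    (hε : 0 < ε) : 0 ≤ sSup (angS p σ τ ε) := by
  obtain ⟨x, hx⟩ := angS_nonempty p σ τ hε
  exact le_trans (angS_subset p σ τ ε hx).1 (le_csSup (angS_bdd p σ τ ε) hx)

private lemma sSup_angS_le_pi {X : Type*} [MetricSpace X] (p : X) (σ τ : ℝ → X) {ε : ℝ}
    (hε : 0 < ε) : sSup (angS p σ τ ε) ≤ Real.pi :=
  csSup_le (angS_nonempty p σ τ hε) fun _ hx => (angS_subset p σ τ ε hx).2

private lemma alex_bddBelow {X : Type*} [MetricSpace X] (p : X) (σ τ : ℝ → X) :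
    BddBelow (Set.range fun ε : {e : ℝ // 0 < e} => sSup (angS p σ τ (ε : ℝ))) := by
  refine ⟨0, ?_⟩
  rintro x ⟨ε, rfl⟩
  exact sSup_angS_nonneg p σ τ ε.2

private lemma alex_nonneg {X : Type*} [MetricSpace X] (p : X) (σ τ : ℝ → X) :
    0 ≤ alexAngleWith 0 p σ τ := by
  rw [alex_eq]
  exact le_ciInf fun ε => sSup_angS_nonneg p σ τ ε.2

private lemma alex_le_sSup {X : Type*} [MetricSpace X] (p : X) (σ τ : ℝ → X) {ε : ℝ}
    (hε : 0 < ε) : alexAngleWith 0 p σ τ ≤ sSup (angS p σ τ ε) := by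
  rw [alex_eq]
  exact ciInf_le (alex_bddBelow p σ τ) ⟨ε, hε⟩

private lemma alex_le_pi {X : Type*} [MetricSpace X] (p : X) (σ τ : ℝ → X) :
    alexAngleWith 0 p σ τ ≤ Real.pi :=
  (alex_le_sSup p σ τ one_pos).trans (sSup_angS_le_pi p σ τ one_pos)

private lemma alex_exists_eps {X : Type*} [MetricSpace X] (p : X) (σ τ : ℝ → X) {b : ℝ}
    (h : alexAngleWith 0 p σ τ < b) :
    ∃ ε : {e : ℝ // 0 < e}, sSup (angS p σ τ (ε : ℝ)) < b := by
  rw [alex_eq] at h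
  exact exists_lt_of_ciInf_lt h

private lemma sSup_angS_mono {X : Type*} [MetricSpace X] (p : X) (σ τ : ℝ → X) {ε ε' : ℝ}
    (hε : 0 < ε) (h : ε ≤ ε') : sSup (angS p σ τ ε) ≤ sSup (angS p σ τ ε') :=
  csSup_le_csSup (angS_bdd p σ τ ε') (angS_nonempty p σ τ hε)
    (Set.image_mono (Set.prod_mono (Set.Ioo_subset_Ioo le_rfl h) (Set.Ioo_subset_Ioo le_rfl h)))

/-- The Alexandrov angles between three geodesic paths issuing from a
common point of a metric space satisfy the triangle inequality. -/
theorem alexAngle_triangle_inequality {X : Type*} [MetricSpace X]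
    (p : X) (c c' c'' : ℝ → X) (L L' L'' : ℝ) (hL : 0 < L) (hL' : 0 < L') (hL'' : 0 < L'')
    (hc0 : c 0 = p) (hc'0 : c' 0 = p) (hc''0 : c'' 0 = p)
    (hc : ∀ s ∈ Set.Icc 0 L, ∀ t ∈ Set.Icc 0 L, dist (c s) (c t) = |s - t|)
    (hc' : ∀ s ∈ Set.Icc 0 L', ∀ t ∈ Set.Icc 0 L', dist (c' s) (c' t) = |s - t|)
    (hc'' : ∀ s ∈ Set.Icc 0 L'', ∀ t ∈ Set.Icc 0 L'', dist (c'' s) (c'' t) = |s - t|) :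
    alexAngleWith 0 p c' c'' ≤ alexAngleWith 0 p c c' + alexAngleWith 0 p c c'' := by
  by_contra hcon
  push_neg at hcon
  have geod_dist : ∀ (σ : ℝ → X) (M : ℝ), σ 0 = p →
      (∀ s ∈ Set.Icc (0:ℝ) M, ∀ u ∈ Set.Icc (0:ℝ) M, dist (σ s) (σ u) = |s - u|) →
      ∀ x : ℝ, 0 ≤ x → x ≤ M → dist p (σ x) = x := by
    intro σ M h0 hg x hx0 hxM
    rw [← h0, hg 0 ⟨le_rfl, hx0.trans hxM⟩ x ⟨hx0, hxM⟩, zero_sub, abs_neg, abs_of_nonneg hx0]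
  obtain ⟨δ, hδdef⟩ : ∃ x : ℝ, x = (alexAngleWith 0 p c' c'' - alexAngleWith 0 p c c' -
      alexAngleWith 0 p c c'') / 3 := ⟨_, rfl⟩
  have hδ : 0 < δ := by rw [hδdef]; linarith
  have hβ0 : 0 ≤ alexAngleWith 0 p c c' := alex_nonneg p c c'
  have hγ0 : 0 ≤ alexAngleWith 0 p c c'' := alex_nonneg p c c''
  have hαπ : alexAngleWith 0 p c' c'' ≤ Real.pi := alex_le_pi p c' c''
  obtain ⟨ψ, hψdef⟩ : ∃ x : ℝ, x = alexAngleWith 0 p c c' + δ := ⟨_, rfl⟩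
  obtain ⟨χ, hχdef⟩ : ∃ x : ℝ, x = alexAngleWith 0 p c c'' + δ := ⟨_, rfl⟩
  have hψ0 : 0 < ψ := by rw [hψdef]; linarith
  have hχ0 : 0 < χ := by rw [hχdef]; linarith
  have hsumlt : ψ + χ < alexAngleWith 0 p c' c'' := by
    rw [hψdef, hχdef, hδdef]; linarith
  have hsum : ψ + χ < Real.pi := hsumlt.trans_le hαπ
  have hsum0 : 0 ≤ ψ + χ := by linarith
  have hψπ : ψ ≤ Real.pi := by linarith
  have hχπ : χ ≤ Real.pi := by linarith
  obtain ⟨ε₁, hε₁⟩ := alex_exists_eps p c c'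
    (show alexAngleWith 0 p c c' < ψ by rw [hψdef]; linarith)
  obtain ⟨ε₂, hε₂⟩ := alex_exists_eps p c c''
    (show alexAngleWith 0 p c c'' < χ by rw [hχdef]; linarith)
  obtain ⟨ε₀, hε₀def⟩ : ∃ x : ℝ, x = min (min (ε₁ : ℝ) (ε₂ : ℝ)) (min L (min L' L'')) :=
    ⟨_, rfl⟩
  have hε₀pos : 0 < ε₀ := by
    rw [hε₀def]
    exact lt_min (lt_min ε₁.2 ε₂.2) (lt_min hL (lt_min hL' hL''))
  have hε₀ε₁ : ε₀ ≤ (ε₁ : ℝ) := by rw [hε₀def]; exact (min_le_left _ _).trans (min_le_left _ _)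
  have hε₀ε₂ : ε₀ ≤ (ε₂ : ℝ) := by rw [hε₀def]; exact (min_le_left _ _).trans (min_le_right _ _)
  have hε₀L : ε₀ ≤ L := by rw [hε₀def]; exact (min_le_right _ _).trans (min_le_left _ _)
  have hε₀L' : ε₀ ≤ L' := by
    rw [hε₀def]
    exact (min_le_right _ _).trans ((min_le_right _ _).trans (min_le_left _ _))
  have hε₀L'' : ε₀ ≤ L'' := by
    rw [hε₀def]
    exact (min_le_right _ _).trans ((min_le_right _ _).trans (min_le_right _ _))
  have hsup1 : sSup (angS p c c' ε₀) < ψ :=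
    (sSup_angS_mono p c c' hε₀pos hε₀ε₁).trans_lt hε₁
  have hsup2 : sSup (angS p c c'' ε₀) < χ :=
    (sSup_angS_mono p c c'' hε₀pos hε₀ε₂).trans_lt hε₂
  have hsup3 : ψ + χ < sSup (angS p c' c'' ε₀) :=
    hsumlt.trans_le (alex_le_sSup p c' c'' hε₀pos)
  obtain ⟨y, hy, hylt⟩ := exists_lt_of_lt_csSup (angS_nonempty p c' c'' hε₀pos) hsup3
  obtain ⟨⟨t1, t2⟩, hmem, rfl⟩ := hy
  obtain ⟨ht1, ht2⟩ := hmem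
  have hdp1 : dist p (c' t1) = t1 :=
    geod_dist c' L' hc'0 hc' t1 ht1.1.le (ht1.2.le.trans hε₀L')
  have hdp2 : dist p (c'' t2) = t2 :=
    geod_dist c'' L'' hc''0 hc'' t2 ht2.1.le (ht2.2.le.trans hε₀L'')
  dsimp only at hylt ht1 ht2
  rw [hdp1, hdp2] at hylt
  obtain ⟨t, u, v, w, ht0, htM, hu0, hv0, hw0, hu2, hv2, hw2, huvw⟩ :=
    model ht1.1 ht2.1 hψ0 hχ0 hsum
  have htε : t < ε₀ := htM.trans_lt (max_lt ht1.2 ht2.2)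
  have hdpt : dist p (c t) = t := geod_dist c L hc0 hc t ht0.le (htε.le.trans hε₀L)
  -- bound dist (c t) (c' t1) ≤ u
  have hle1 : cmpAngle 0 t t1 (dist (c t) (c' t1)) ≤ ψ := by
    have hmem1 : cmpAngle 0 (dist p (c t)) (dist p (c' t1)) (dist (c t) (c' t1)) ∈
        angS p c c' ε₀ := ⟨(t, t1), ⟨⟨ht0, htε⟩, ht1⟩, rfl⟩
    have := (le_csSup (angS_bdd p c c' ε₀) hmem1).trans hsup1.le
    rwa [hdpt, hdp1] at this
  have htr1a : |t - t1| ≤ dist (c t) (c' t1) := by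
    calc |t - t1| = |dist (c t) p - dist (c' t1) p| := by
          rw [dist_comm (c t) p, dist_comm (c' t1) p, hdpt, hdp1]
      _ ≤ dist (c t) (c' t1) := abs_dist_sub_le _ _ _
  have htr1b : dist (c t) (c' t1) ≤ t + t1 := by
    calc dist (c t) (c' t1) ≤ dist (c t) p + dist p (c' t1) := dist_triangle _ _ _
      _ = t + t1 := by rw [dist_comm (c t) p, hdpt, hdp1]
  have hb1 := sq_cmp_le ht0 ht1.1 htr1a htr1b hψπ hle1
  have hd1u : dist (c t) (c' t1) ≤ u := by
    refine le_of_sq_le'' ?_ hu0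
    rw [hu2]; linarith [hb1]
  -- bound dist (c t) (c'' t2) ≤ v
  have hle2 : cmpAngle 0 t t2 (dist (c t) (c'' t2)) ≤ χ := by
    have hmem2 : cmpAngle 0 (dist p (c t)) (dist p (c'' t2)) (dist (c t) (c'' t2)) ∈
        angS p c c'' ε₀ := ⟨(t, t2), ⟨⟨ht0, htε⟩, ht2⟩, rfl⟩
    have := (le_csSup (angS_bdd p c c'' ε₀) hmem2).trans hsup2.le
    rwa [hdpt, hdp2] at this
  have htr2a : |t - t2| ≤ dist (c t) (c'' t2) := by
    calc |t - t2| = |dist (c t) p - dist (c'' t2) p| := by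
          rw [dist_comm (c t) p, dist_comm (c'' t2) p, hdpt, hdp2]
      _ ≤ dist (c t) (c'' t2) := abs_dist_sub_le _ _ _
  have htr2b : dist (c t) (c'' t2) ≤ t + t2 := by
    calc dist (c t) (c'' t2) ≤ dist (c t) p + dist p (c'' t2) := dist_triangle _ _ _
      _ = t + t2 := by rw [dist_comm (c t) p, hdpt, hdp2]
  have hb2 := sq_cmp_le ht0 ht2.1 htr2a htr2b hχπ hle2
  have hd2v : dist (c t) (c'' t2) ≤ v := by
    refine le_of_sq_le'' ?_ hv0
    rw [hv2]; linarith [hb2]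
  -- lower bound : w < dist (c' t1) (c'' t2)
  have htr3a : |t1 - t2| ≤ dist (c' t1) (c'' t2) := by
    calc |t1 - t2| = |dist (c' t1) p - dist (c'' t2) p| := by
          rw [dist_comm (c' t1) p, dist_comm (c'' t2) p, hdp1, hdp2]
      _ ≤ dist (c' t1) (c'' t2) := abs_dist_sub_le _ _ _
  have htr3b : dist (c' t1) (c'' t2) ≤ t1 + t2 := by
    calc dist (c' t1) (c'' t2) ≤ dist (c' t1) p + dist p (c'' t2) := dist_triangle _ _ _
      _ = t1 + t2 := by rw [dist_comm (c' t1) p, hdp1, hdp2]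
  have hb3 := sq_cmp_gt ht1.1 ht2.1 htr3a htr3b hsum0 hylt
  have hw2lt : w ^ 2 < dist (c' t1) (c'' t2) ^ 2 := by rw [hw2]; linarith [hb3]
  have hwd3 : w < dist (c' t1) (c'' t2) := lt_of_sq_lt'' hw2lt hw0 dist_nonneg
  have hfinal : dist (c' t1) (c'' t2) ≤ u + v := by
    calc dist (c' t1) (c'' t2) ≤ dist (c' t1) (c t) + dist (c t) (c'' t2) :=
          dist_triangle _ _ _
      _ ≤ u + v := by rw [dist_comm (c' t1) (c t)]; exact add_le_add hd1u hd2v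
  linarith [huvw ▸ hfinal]
end
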